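/- Let (X, τ) be a metrizable space and let M ⊆ X be a subspace with Ind M ≤ 0, i.e., every pair of disjoint relatively closed subsets of M can be separated by a relatively clopen subset of M. Then the space (X, τ(M)) is metrizable if and only if M is a Gδ-set in (X, τ). -/

import Mathlib

/-- The Bing–Hanner extension `τ(M)` of a topology `τ` on `X` determined by a subset `M ⊆ X`:
its open sets are exactly the sets of the form `U ∪ K` with `U` a `τ`-open set and
`K ⊆ X \ M`. -/
def bingHanner {X : Type*} (τ : TopologicalSpace X) (M : Set X) : TopologicalSpace X where
  IsOpen O := ∃ U K : Set X, τ.IsOpen U ∧ K ⊆ Mᶜ ∧ O = U ∪ K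
  isOpen_univ := ⟨Set.univ, ∅, τ.isOpen_univ, by simp, by simp⟩
  isOpen_inter := by
    rintro s t ⟨U₁, K₁, hU₁, hK₁, rfl⟩ ⟨U₂, K₂, hU₂, hK₂, rfl⟩
    refine ⟨U₁ ∩ U₂, ((U₁ ∪ K₁) ∩ (U₂ ∪ K₂)) \ (U₁ ∩ U₂),
      τ.isOpen_inter _ _ hU₁ hU₂, ?_, ?_⟩
    · rintro x ⟨⟨h1, h2⟩, hn⟩
      rcases h1 with h1 | h1
      · rcases h2 with h2 | h2
        · exact absurd ⟨h1, h2⟩ hn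
        · exact hK₂ h2
      · exact hK₁ h1
    · have hsub : U₁ ∩ U₂ ⊆ (U₁ ∪ K₁) ∩ (U₂ ∪ K₂) :=
        fun x hx => ⟨Or.inl hx.1, Or.inl hx.2⟩
      exact (Set.union_diff_cancel hsub).symm
  isOpen_sUnion := by
    intro S hS
    choose U K hU hK hEq using hS
    refine ⟨⋃ s, ⋃ h : s ∈ S, U s h, ⋃ s, ⋃ h : s ∈ S, K s h, ?_, ?_, ?_⟩
    · letI := τ
      exact isOpen_iUnion fun s => isOpen_iUnion fun h => hU s h
    · exact Set.iUnion_subset fun s => Set.iUnion_subset fun h => hK s h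
    · ext x
      simp only [Set.mem_sUnion, Set.mem_union, Set.mem_iUnion]
      constructor
      · rintro ⟨s, hs, hx⟩
        rw [hEq s hs] at hx
        rcases hx with hx | hx
        · exact Or.inl ⟨s, hs, hx⟩
        · exact Or.inr ⟨s, hs, hx⟩
      · rintro (⟨s, hs, hx⟩ | ⟨s, hs, hx⟩)
        · exact ⟨s, hs, by rw [hEq s hs]; exact Or.inl hx⟩
        · exact ⟨s, hs, by rw [hEq s hs]; exact Or.inr hx⟩

/-- `covDimLE t n` : the covering dimension of `(X, t)` is at most `n`, i.e. every finite
open cover admits a finite open refinement covering `X` in which any `n + 2` pairwise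
distinct members have empty intersection. -/
def covDimLE {X : Type*} (t : TopologicalSpace X) (n : ℕ) : Prop :=
  ∀ C : Set (Set X), C.Finite → (∀ U ∈ C, t.IsOpen U) → ⋃₀ C = Set.univ →
    ∃ V : Set (Set X), V.Finite ∧ (∀ U ∈ V, t.IsOpen U) ∧ ⋃₀ V = Set.univ ∧
      (∀ U ∈ V, ∃ W ∈ C, U ⊆ W) ∧
      ∀ F : Finset (Set X), ↑F ⊆ V → F.card = n + 2 → ⋂₀ (F : Set (Set X)) = ∅

/-- `IndLE0 t` : the large inductive dimension of `(Z, t)` is at most `0`, i.e. any two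
disjoint closed sets are separated by a clopen set. -/
def IndLE0 {Z : Type*} (t : TopologicalSpace Z) : Prop :=
  ∀ A B : Set Z, @IsClosed Z t A → @IsClosed Z t B → Disjoint A B →
    ∃ U : Set Z, t.IsOpen U ∧ @IsClosed Z t U ∧ A ⊆ U ∧ U ∩ B = ∅

/-- `indLE0 t` : the small inductive dimension of `(Z, t)` is at most `0`, i.e. every point
has a neighborhood basis of clopen sets. -/
def indLE0 {Z : Type*} (t : TopologicalSpace Z) : Prop :=
  ∀ (x : Z) (O : Set Z), t.IsOpen O → x ∈ O →
    ∃ U : Set Z, t.IsOpen U ∧ @IsClosed Z t U ∧ x ∈ U ∧ U ⊆ O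

/-- `L` is a partition between `A` and `B` in `(X, t)`. -/
def isPartitionBetween {X : Type*} (t : TopologicalSpace X) (A B L : Set X) : Prop :=
  ∃ U V : Set X, t.IsOpen U ∧ t.IsOpen V ∧ Disjoint U V ∧ A ⊆ U ∧ B ⊆ V ∧ L = (U ∪ V)ᶜ

/-- If `(X, τ)` is metrizable and `M ⊆ X` satisfies `Ind M ≤ 0`, then
`(X, τ(M))` is metrizable iff `M` is a `Gδ`-set in `(X, τ)`. -/
theorem bingHanner_metrizable_iff_Gdelta {X : Type*} (τ : TopologicalSpace X)
    (hmet : @TopologicalSpace.MetrizableSpace X τ) (M : Set X)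
    (hM : IndLE0 (TopologicalSpace.induced (Subtype.val : M → X) τ)) :
    @TopologicalSpace.MetrizableSpace X (bingHanner τ M) ↔ @IsGδ X τ M := by
  classical
  constructor
  · -- Easy direction: metrizable implies `M` is a `Gδ` set in `τ`.
    intro hmet'
    have hMc : (bingHanner τ M).IsOpen Mᶜ :=
      ⟨∅, Mᶜ, @isOpen_empty X τ, subset_rfl, (Set.empty_union _).symm⟩
    have hclosed : @IsClosed X (bingHanner τ M) M := @IsClosed.mk X (bingHanner τ M) M hMc
    have h1 : @IsGδ X (bingHanner τ M) M := by
      letI := bingHanner τ M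
      letI : MetricSpace X := TopologicalSpace.metrizableSpaceMetric X
      exact hclosed.isGδ
    obtain ⟨g, hgo, hgM⟩ := (@isGδ_iff_eq_iInter_nat X (bingHanner τ M) M).mp h1
    have hgo' : ∀ n, ∃ U K : Set X, τ.IsOpen U ∧ K ⊆ Mᶜ ∧ g n = U ∪ K := hgo
    choose U K hU hK hEq using hgo'
    refine (@isGδ_iff_eq_iInter_nat X τ M).mpr ⟨U, hU, ?_⟩
    apply Set.Subset.antisymm
    · intro x hx
      simp only [Set.mem_iInter]
      intro n
      have hxg : x ∈ g n := by
        rw [hgM] at hx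
        exact Set.mem_iInter.mp hx n
      rw [hEq n] at hxg
      rcases hxg with h | h
      · exact h
      · exact absurd hx (hK n h)
    · intro x hx
      rw [hgM]
      simp only [Set.mem_iInter] at hx ⊢
      intro n
      rw [hEq n]
      exact Or.inl (hx n)
  · -- Hard direction: if `M` is `Gδ` in `τ`, then `(X, τ(M))` is metrizable.
    intro hGδ
    letI := τ
    letI mX : MetricSpace X := TopologicalSpace.metrizableSpaceMetric X
    obtain ⟨G, hGopen, hGM⟩ := hGδ.eq_iInter_nat
    -- the weight function vanishing on `M` and positive off `M`
    set f : X → ℝ := fun x => if h : ∃ n, x ∉ G n then (1/2 : ℝ) ^ (Nat.find h) else 0 with hf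
    have hmemM : ∀ x : X, x ∈ M ↔ ∀ n, x ∈ G n := by
      intro x; rw [hGM]; exact Set.mem_iInter
    have hfM : ∀ x ∈ M, f x = 0 := by
      intro x hx
      have : ¬ ∃ n, x ∉ G n := by
        push_neg
        exact (hmemM x).mp hx
      simp only [hf, dif_neg this]
    have hfpos : ∀ x, x ∉ M → 0 < f x := by
      intro x hx
      have hex : ∃ n, x ∉ G n := by
        by_contra h
        push_neg at h
        exact hx ((hmemM x).mpr h)
      simp only [hf, dif_pos hex]
      positivity
    have hfnonneg : ∀ x, 0 ≤ f x := by
      intro x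
      by_cases hx : x ∈ M
      · rw [hfM x hx]
      · exact (hfpos x hx).le
    -- key continuity property of `f` at points of `M`
    have hfsmall : ∀ ε : ℝ, 0 < ε → ∃ V : Set X, τ.IsOpen V ∧ M ⊆ V ∧ ∀ y ∈ V, f y < ε := by
      intro ε hε
      obtain ⟨N, hN⟩ := exists_pow_lt_of_lt_one hε (by norm_num : (1/2 : ℝ) < 1)
      refine ⟨⋂ k ∈ Finset.range (N + 1), G k, ?_, ?_, ?_⟩
      · exact isOpen_biInter_finset fun k _ => hGopen k
      · intro x hx
        exact Set.mem_iInter₂.mpr fun k _ => (hmemM x).mp hx k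
      · intro y hy
        by_cases hyM : y ∈ M
        · rw [hfM y hyM]; exact hε
        · have hex : ∃ n, y ∉ G n := by
            by_contra h
            push_neg at h
            exact hyM ((hmemM y).mpr h)
          have hfind : N + 1 ≤ Nat.find hex := by
            by_contra h
            push_neg at h
            have hyk : y ∈ G (Nat.find hex) := Set.mem_iInter₂.mp hy (Nat.find hex)
              (Finset.mem_range.mpr h)
            exact (Nat.find_spec hex) hyk
          have h1 : f y = (1/2 : ℝ) ^ (Nat.find hex) := by simp only [hf, dif_pos hex]
          rw [h1]
          calc (1/2 : ℝ) ^ (Nat.find hex) ≤ (1/2 : ℝ) ^ N :=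
                pow_le_pow_of_le_one (by norm_num) (by norm_num) (by omega)
            _ < ε := hN
    -- the new distance
    set ρ : X → X → ℝ := fun x y => if x = y then 0 else dist x y + f x + f y with hρ
    have hρself : ∀ x, ρ x x = 0 := fun x => if_pos rfl
    have hρnonneg : ∀ x y, 0 ≤ ρ x y := by
      intro x y
      by_cases h : x = y
      · rw [hρ]; simp [h]
      · simp only [hρ, if_neg h]
        have := dist_nonneg (x := x) (y := y)
        have := hfnonneg x
        have := hfnonneg y
        linarith
    have hρd : ∀ x y, x ≠ y → dist x y ≤ ρ x y := by
      intro x y h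
      simp only [hρ, if_neg h]
      have := hfnonneg x
      have := hfnonneg y
      linarith
    have hρcomm : ∀ x y, ρ x y = ρ y x := by
      intro x y
      by_cases h : x = y
      · subst h; rfl
      · simp only [hρ, if_neg h, if_neg (Ne.symm h)]
        rw [dist_comm]; ring
    have hρtri : ∀ x y z, ρ x z ≤ ρ x y + ρ y z := by
      intro x y z
      by_cases hxz : x = z
      · have h0 : ρ x z = 0 := by simp [hρ, hxz]
        rw [h0]
        exact add_nonneg (hρnonneg x y) (hρnonneg y z)
      · by_cases hxy : x = y
        · have h0 : ρ x y = 0 := by simp [hρ, hxy]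
          have h1 : ρ y z = ρ x z := by rw [hxy]
          rw [h0, h1]; linarith
        · by_cases hyz : y = z
          · have h0 : ρ y z = 0 := by simp [hρ, hyz]
            have h1 : ρ x y = ρ x z := by rw [hyz]
            rw [h0, h1]; linarith
          · simp only [hρ, if_neg hxz, if_neg hxy, if_neg hyz]
            have := dist_triangle x y z
            have := hfnonneg y
            linarith
    have hρeq : ∀ x y, ρ x y = 0 → x = y := by
      intro x y h
      by_contra hne
      have h1 : dist x y ≤ ρ x y := hρd x y hne
      rw [h] at h1
      exact hne (eq_of_dist_eq_zero (le_antisymm h1 dist_nonneg))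
    -- the open-sets characterization
    have Hopen : ∀ s : Set X, (bingHanner τ M).IsOpen s ↔
        ∀ x ∈ s, ∃ ε > 0, ∀ y, ρ x y < ε → y ∈ s := by
      intro s
      constructor
      · rintro ⟨U, K, hU, hK, rfl⟩ x hx
        by_cases hxM : x ∈ M
        · have hxU : x ∈ U := by
            rcases hx with h | h
            · exact h
            · exact absurd hxM (hK h)
          have hUo : IsOpen U := hU
          obtain ⟨ε, hε, hball⟩ := Metric.isOpen_iff.mp hUo x hxU
          refine ⟨ε, hε, fun y hy => ?_⟩
          by_cases hxy : x = y
          · subst hxy; exact Or.inl hxU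
          · have : dist x y < ε := lt_of_le_of_lt (hρd x y hxy) hy
            exact Or.inl (hball (by rwa [Metric.mem_ball, dist_comm]))
        · refine ⟨f x, hfpos x hxM, fun y hy => ?_⟩
          by_cases hxy : x = y
          · subst hxy; exact hx
          · exfalso
            have h1 : f x ≤ ρ x y := by
              simp only [hρ, if_neg hxy]
              have := dist_nonneg (x := x) (y := y)
              have := hfnonneg y
              linarith
            linarith
      · intro h
        refine ⟨{y | ∃ V : Set X, τ.IsOpen V ∧ y ∈ V ∧ V ⊆ s}, s \ M, ?_, ?_, ?_⟩
        · have : {y | ∃ V : Set X, τ.IsOpen V ∧ y ∈ V ∧ V ⊆ s} =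
              ⋃₀ {V : Set X | τ.IsOpen V ∧ V ⊆ s} := by
            ext y
            simp only [Set.mem_setOf_eq, Set.mem_sUnion]
            exact ⟨fun ⟨V, h1, h2, h3⟩ => ⟨V, ⟨h1, h3⟩, h2⟩,
              fun ⟨V, ⟨h1, h3⟩, h2⟩ => ⟨V, h1, h2, h3⟩⟩
          rw [this]
          exact τ.isOpen_sUnion _ fun V hV => hV.1
        · intro y hy
          exact hy.2
        · apply Set.Subset.antisymm
          · intro x hx
            by_cases hxM : x ∈ M
            · obtain ⟨ε, hε, hball⟩ := h x hx
              obtain ⟨V, hVo, hMV, hVf⟩ := hfsmall (ε/2) (by linarith)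
              refine Or.inl ⟨V ∩ Metric.ball x (ε/2), ?_, ⟨hMV hxM, ?_⟩, ?_⟩
              · exact IsOpen.inter hVo Metric.isOpen_ball
              · exact Metric.mem_ball_self (by linarith)
              · intro y ⟨hyV, hyb⟩
                by_cases hxy : x = y
                · subst hxy; exact hx
                · apply hball
                  have hd : dist x y < ε/2 := by
                    rw [Metric.mem_ball, dist_comm] at hyb
                    exact hyb
                  have hfy : f y < ε/2 := hVf y hyV
                  have hfx : f x = 0 := hfM x hxM
                  simp only [hρ, if_neg hxy]
                  linarith
            · exact Or.inr ⟨hx, hxM⟩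
          · rintro x (⟨V, _, hxV, hVs⟩ | ⟨hxs, _⟩)
            · exact hVs hxV
            · exact hxs
    letI m : MetricSpace X :=
      (@MetricSpace.ofDistTopology X (bingHanner τ M) ρ hρself hρcomm hρtri Hopen hρeq)
    exact (inferInstance : @TopologicalSpace.MetrizableSpace X m.toUniformSpace.toTopologicalSpace)
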